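/- Let P : ℂ → ℂ be a polynomial of degree d ≥ 1 and q : ℂⁿ → ℂ a nonconstant polynomial such that the composite g = P ∘ q has nowhere-vanishing gradient (i.e., g is a submersion at every point). Then d = 1. -/

import Mathlib

theorem stmt1 (n d : ℕ) (hd : 1 ≤ d) (P : Polynomial ℂ) (hP : P.natDegree = d)
    (q : MvPolynomial (Fin n) ℂ)
    (hq : ∃ x y : Fin n → ℂ, MvPolynomial.eval x q ≠ MvPolynomial.eval y q)
    (hsub : ∀ x : Fin n → ℂ,
      fderiv ℂ (fun v : Fin n → ℂ => Polynomial.eval (MvPolynomial.eval v q) P) x ≠ 0) :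
    d = 1 := by
  by_contra hne
  have hd2 : 2 ≤ d := by omega
  -- Step 1: P' never vanishes on the image of q
  have key : ∀ a : Fin n → ℂ,
      Polynomial.eval (MvPolynomial.eval a q) P.derivative ≠ 0 := by
    intro a ha
    apply hsub a
    have hdq : DifferentiableAt ℂ (fun v : Fin n → ℂ => MvPolynomial.eval v q) a := by
      have h := AnalyticAt.aeval_mvPolynomial (𝕜 := ℂ) (f := fun v : Fin n → ℂ => v) (z := a)
        (fun i => (ContinuousLinearMap.proj (R := ℂ) (φ := fun _ : Fin n => ℂ) i).analyticAt a) q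
      have he : (fun v : Fin n → ℂ => (MvPolynomial.aeval v) q)
          = fun v : Fin n → ℂ => MvPolynomial.eval v q := by
        funext v
        rw [← MvPolynomial.coe_aeval_eq_eval]
        rfl
      rw [he] at h
      exact h.differentiableAt
    have h1 := hdq.hasFDerivAt
    have h2 : HasDerivAt (fun z : ℂ => Polynomial.eval z P)
        (Polynomial.eval (MvPolynomial.eval a q) P.derivative) (MvPolynomial.eval a q) :=
      P.hasDerivAt _
    have h3 := h2.comp_hasFDerivAt a h1
    rw [ha] at h3
    have := h3.fderiv
    exact this.trans (by ext v; simp)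
  -- Step 2: P' has a root c
  have hP0 : 0 < P.natDegree := by omega
  have hder : 0 < P.derivative.degree := by
    rw [Polynomial.degree_derivative_eq P hP0]
    exact_mod_cast (by omega : 0 < P.natDegree - 1)
  obtain ⟨c, hc⟩ := Complex.exists_root hder
  -- Step 3: restrict q to a line through x and y; it attains c
  obtain ⟨x, y, hxy⟩ := hq
  set g : Fin n → Polynomial ℂ :=
    fun i => Polynomial.C (x i) + Polynomial.C (y i - x i) * Polynomial.X with hg
  set f : Polynomial ℂ := MvPolynomial.eval₂ (Polynomial.C : ℂ →+* Polynomial ℂ) g q with hf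
  have heval : ∀ t : ℂ, Polynomial.eval t f
      = MvPolynomial.eval (fun i => x i + t * (y i - x i)) q := by
    intro t
    have hcomp := MvPolynomial.eval₂_comp_left (Polynomial.evalRingHom t)
      (Polynomial.C : ℂ →+* Polynomial ℂ) g q
    have h1 : (Polynomial.evalRingHom t).comp (Polynomial.C : ℂ →+* Polynomial ℂ)
        = RingHom.id ℂ := by ext z; simp
    have h2 : (Polynomial.evalRingHom t) ∘ g = fun i => x i + t * (y i - x i) := by
      funext i; simp [hg, mul_comm]
    rw [h1, h2] at hcomp
    rw [MvPolynomial.eval₂_id] at hcomp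
    exact hcomp
  have h0 : Polynomial.eval 0 f = MvPolynomial.eval x q := by
    rw [heval]; simp
  have h1' : Polynomial.eval 1 f = MvPolynomial.eval y q := by
    rw [heval]
    have hy : (fun i => x i + 1 * (y i - x i)) = y := by funext i; ring
    rw [hy]
  have hfd : 0 < (f - Polynomial.C c).degree := by
    by_contra hle
    have := Polynomial.eq_C_of_degree_le_zero (not_lt.mp hle)
    apply hxy
    have hfc : f = Polynomial.C ((f - Polynomial.C c).coeff 0 + c) := by
      rw [map_add, ← this]; ring
    rw [← h0, ← h1', hfc]
    simp
  obtain ⟨t, ht⟩ := Complex.exists_root hfd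
  have hqc : MvPolynomial.eval (fun i => x i + t * (y i - x i)) q = c := by
    have : Polynomial.eval t f - c = 0 := by
      simpa [Polynomial.IsRoot] using ht
    rw [← heval]
    exact sub_eq_zero.mp this
  exact key _ (by rw [hqc]; exact hc)
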